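/- Let α ∈ (0,1), ρ ∈ (0,1), F₁, F₂ > 0, and define u(x₁, x₂) = -(4/π^{2+2α}) ∑_{n,m ≥ 1} (F₁+F₂)/((n²+m²)^α n m) · sin(π n ρ) sin(π m ρ) cos(π n x₁ + π m x₂). Then ‖u‖_∞ ≤ C(α)(F₁+F₂) ρ^{2α} for a constant C(α) depending only on α. -/

import Mathlib

open Real

lemma bern {t β : ℝ} (ht : 0 ≤ t) (hβ0 : 0 ≤ β) (hβ1 : β ≤ 1) :
    t ^ β ≤ 1 + β * (t - 1) := by
  have := rpow_one_add_le_one_add_mul_self (s := t - 1) (by linarith) hβ0 hβ1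
  simpa using this

lemma headIneq {α : ℝ} (hα : 0 < α) (hα1 : α < 1) {x : ℝ} (hx : 0 ≤ x) :
    (1 - α) * (x + 1) ^ (-α) ≤ (x + 1) ^ (1 - α) - x ^ (1 - α) := by
  have hx1 : (0:ℝ) < x + 1 := by linarith
  have ht : (0:ℝ) ≤ x / (x + 1) := div_nonneg hx hx1.le
  have hb := bern (t := x / (x + 1)) (β := 1 - α) ht (by linarith) (by linarith)
  have key : x ^ (1 - α) ≤ (x + 1) ^ (1 - α) * (1 + (1 - α) * (x / (x + 1) - 1)) := by
    have h1 : (x / (x + 1)) ^ (1 - α) * (x + 1) ^ (1 - α) = x ^ (1 - α) := by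
      rw [← Real.mul_rpow ht hx1.le, div_mul_cancel₀ _ hx1.ne']
    calc x ^ (1 - α) = (x / (x + 1)) ^ (1 - α) * (x + 1) ^ (1 - α) := h1.symm
      _ ≤ (1 + (1 - α) * (x / (x + 1) - 1)) * (x + 1) ^ (1 - α) :=
        mul_le_mul_of_nonneg_right hb (rpow_nonneg hx1.le _)
      _ = (x + 1) ^ (1 - α) * (1 + (1 - α) * (x / (x + 1) - 1)) := by ring
  have hdiv : x / (x + 1) - 1 = -(1 / (x + 1)) := by field_simp; ring
  have hpow : (x + 1) ^ (1 - α) * (1 / (x + 1)) = (x + 1) ^ (-α) := by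
    rw [one_div, ← Real.rpow_neg_one (x + 1), ← Real.rpow_add hx1]
    congr 1; ring
  have : (x + 1) ^ (1 - α) * (1 + (1 - α) * (x / (x + 1) - 1))
      = (x + 1) ^ (1 - α) - (1 - α) * ((x + 1) ^ (1 - α) * (1 / (x + 1))) := by
    rw [hdiv]; ring
  rw [this, hpow] at key
  linarith

lemma tailIneq {α : ℝ} (hα : 0 < α) (hα1 : α < 1) {x : ℝ} (hx : 1 ≤ x) :
    α * (x + 1) ^ (-(1 + α)) ≤ x ^ (-α) - (x + 1) ^ (-α) := by
  have hx0 : (0:ℝ) < x := by linarith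
  have hx1 : (0:ℝ) < x + 1 := by linarith
  set t : ℝ := x / (x + 1) with hts
  have ht0 : 0 < t := div_pos hx0 hx1
  have hb := bern (t := t) (β := α) ht0.le hα.le hα1.le
  set a : ℝ := 1 / (x + 1) with has
  have hteq : t - 1 = -a := by rw [hts, has]; field_simp; ring
  have ha0 : 0 < a := by positivity
  have hb' : t ^ α ≤ 1 - α * a := by rw [hteq] at hb; linarith [hb]
  have htpos : 0 < t ^ α := rpow_pos_of_pos ht0 _
  have h2 : (1 + α * a) * t ^ α ≤ 1 := by
    calc (1 + α * a) * t ^ α ≤ (1 + α * a) * (1 - α * a) := by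
          apply mul_le_mul_of_nonneg_left hb' (by positivity)
      _ = 1 - (α * a) ^ 2 := by ring
      _ ≤ 1 := by nlinarith [sq_nonneg (α * a)]
  have h3 : 1 + α * a ≤ t ^ (-α) := by
    rw [Real.rpow_neg ht0.le, le_inv_comm₀ (by positivity) htpos, inv_eq_one_div]
    exact (le_div_iff₀ (by positivity)).mpr (by nlinarith [h2])
  -- x^(-α) = t^(-α) * (x+1)^(-α)
  have hxeq : x ^ (-α) = t ^ (-α) * (x + 1) ^ (-α) := by
    rw [← Real.mul_rpow ht0.le hx1.le, hts, div_mul_cancel₀ _ hx1.ne']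
  have hp1 : (0:ℝ) < (x + 1) ^ (-α) := rpow_pos_of_pos hx1 _
  have hlast : (x + 1) ^ (-α) * a = (x + 1) ^ (-(1 + α)) := by
    rw [has, one_div, ← Real.rpow_neg_one (x + 1), ← Real.rpow_add hx1]
    norm_num
  have : x ^ (-α) - (x + 1) ^ (-α) = (x + 1) ^ (-α) * (t ^ (-α) - 1) := by
    rw [hxeq]; ring
  rw [this, ← hlast]
  calc α * ((x + 1) ^ (-α) * a) = (x + 1) ^ (-α) * (α * a) := by ring
    _ ≤ (x + 1) ^ (-α) * (t ^ (-α) - 1) := by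
        apply mul_le_mul_of_nonneg_left _ hp1.le
        linarith

lemma summable_aux {α : ℝ} (hα : 0 < α) :
    Summable (fun n : ℕ => ((n : ℝ) + 1) ^ (-(1 + α))) := by
  have h : Summable (fun n : ℕ => ((n : ℝ)) ^ (-(1 + α))) :=
    Real.summable_nat_rpow.mpr (by linarith)
  have h2 := (summable_nat_add_iff 1).mpr h
  apply h2.congr
  intro n
  push_cast
  ring_nf

lemma sumKey {α : ℝ} (hα : 0 < α) (hα1 : α < 1) {ρ : ℝ} (hρ : 0 < ρ) (hρ1 : ρ < 1) :
    Summable (fun n : ℕ => min 1 (π * ((n : ℝ) + 1) * ρ) * ((n : ℝ) + 1) ^ (-(1 + α))) ∧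
    ∑' n : ℕ, min 1 (π * ((n : ℝ) + 1) * ρ) * ((n : ℝ) + 1) ^ (-(1 + α))
      ≤ (2 * π / (1 - α) + 1 / α) * ρ ^ α := by
  set f : ℕ → ℝ := fun n => min 1 (π * ((n : ℝ) + 1) * ρ) * ((n : ℝ) + 1) ^ (-(1 + α)) with hf
  have hn1 : ∀ n : ℕ, (0:ℝ) < (n : ℝ) + 1 := fun n => by positivity
  have hfnonneg : ∀ n, 0 ≤ f n := by
    intro n
    apply mul_nonneg (le_min zero_le_one (by positivity)) (rpow_nonneg (hn1 n).le _)
  have hfle : ∀ n, f n ≤ ((n : ℝ) + 1) ^ (-(1 + α)) := fun n =>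
    mul_le_of_le_one_left (rpow_nonneg (hn1 n).le _) (min_le_left _ _)
  have hsumf : Summable f := (summable_aux hα).of_nonneg_of_le hfnonneg hfle
  refine ⟨hsumf, ?_⟩
  set N : ℕ := ⌈1 / ρ⌉₊ with hN
  have hρα : (0:ℝ) < ρ ^ α := rpow_pos_of_pos hρ _
  have hNlb : 1 / ρ ≤ (N : ℝ) := Nat.le_ceil _
  have hNpos : (0:ℝ) < N := lt_of_lt_of_le (by positivity) hNlb
  have hN1 : 1 ≤ N := Nat.ceil_pos.mpr (by positivity)
  have hNub : (N : ℝ) ≤ 2 / ρ := by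
    have h2 := Nat.ceil_lt_add_one (by positivity : (0:ℝ) ≤ 1 / ρ)
    have h1 : (1:ℝ) ≤ 1 / ρ := one_le_one_div hρ hρ1.le
    have h3 : 2 / ρ = 1 / ρ + 1 / ρ := by ring
    rw [h3]; rw [← hN] at h2; linarith
  -- head per-term bound
  have headTerm : ∀ i : ℕ, f i ≤ π * ρ * ((i:ℝ)+1) ^ (-α) := by
    intro i
    have h0 : f i ≤ (π * ((i:ℝ)+1) * ρ) * ((i:ℝ)+1) ^ (-(1+α)) :=
      mul_le_mul_of_nonneg_right (min_le_right _ _) (rpow_nonneg (hn1 i).le _)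
    refine h0.trans (le_of_eq ?_)
    have h1 : ((i:ℝ)+1) * ((i:ℝ)+1) ^ (-(1+α)) = ((i:ℝ)+1) ^ (-α) := by
      nth_rewrite 1 [← Real.rpow_one ((i:ℝ)+1)]
      rw [← Real.rpow_add (hn1 i)]; congr 1; ring
    calc π * ((i:ℝ)+1) * ρ * ((i:ℝ)+1) ^ (-(1+α))
        = π * ρ * (((i:ℝ)+1) * ((i:ℝ)+1) ^ (-(1+α))) := by ring
      _ = π * ρ * ((i:ℝ)+1) ^ (-α) := by rw [h1]
  have h1α : (0:ℝ) < 1 - α := by linarith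
  have headSum : ∑ i ∈ Finset.range N, ((i:ℝ)+1) ^ (-α) ≤ (N:ℝ) ^ (1-α) / (1-α) := by
    rw [le_div_iff₀ h1α]
    have tele := Finset.sum_range_sub (fun i : ℕ => ((i:ℝ)) ^ (1-α)) N
    have hzero : ((0:ℕ):ℝ) ^ (1-α) = 0 := by
      simp [Real.zero_rpow (ne_of_gt h1α)]
    have hper : ∀ i ∈ Finset.range N, (1-α) * ((i:ℝ)+1) ^ (-α)
        ≤ (((i+1:ℕ)):ℝ) ^ (1-α) - ((i:ℕ):ℝ) ^ (1-α) := by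
      intro i _
      have := headIneq hα hα1 (x := (i:ℝ)) (Nat.cast_nonneg i)
      push_cast
      convert this using 2
    calc (∑ i ∈ Finset.range N, ((i:ℝ)+1) ^ (-α)) * (1-α)
        = ∑ i ∈ Finset.range N, (1-α) * ((i:ℝ)+1) ^ (-α) := by
          rw [Finset.sum_mul]; exact Finset.sum_congr rfl (fun i _ => by ring)
      _ ≤ ∑ i ∈ Finset.range N, ((((i+1:ℕ)):ℝ) ^ (1-α) - ((i:ℕ):ℝ) ^ (1-α)) :=
          Finset.sum_le_sum hper
      _ = (N:ℝ) ^ (1-α) - ((0:ℕ):ℝ) ^ (1-α) := tele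
      _ ≤ (N:ℝ) ^ (1-α) := by rw [hzero]; simp
  have e4 : ρ * (ρ ^ (1-α))⁻¹ = ρ ^ α := by
    rw [← Real.rpow_neg hρ.le]
    nth_rewrite 1 [← Real.rpow_one ρ]
    rw [← Real.rpow_add hρ]; congr 1; ring
  have head : ∑ i ∈ Finset.range N, f i ≤ 2 * π / (1-α) * ρ ^ α := by
    have e1 : (N:ℝ) ^ (1-α) ≤ (2/ρ) ^ (1-α) := rpow_le_rpow hNpos.le hNub (by linarith)
    have e2 : (2/ρ) ^ (1-α) = 2 ^ (1-α) * (ρ ^ (1-α))⁻¹ := by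
      rw [Real.div_rpow (by norm_num) hρ.le, div_eq_mul_inv]
    have e3 : (2:ℝ) ^ (1-α) ≤ 2 := by
      nth_rewrite 2 [← Real.rpow_one 2]
      exact rpow_le_rpow_of_exponent_le one_le_two (by linarith)
    have hinv : (0:ℝ) ≤ (ρ ^ (1-α))⁻¹ := by positivity
    have e5 : (N:ℝ) ^ (1-α) ≤ 2 * (ρ ^ (1-α))⁻¹ := by
      refine e1.trans ?_
      rw [e2]
      exact mul_le_mul_of_nonneg_right e3 hinv
    calc ∑ i ∈ Finset.range N, f i
        ≤ ∑ i ∈ Finset.range N, π * ρ * ((i:ℝ)+1) ^ (-α) :=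
          Finset.sum_le_sum (fun i _ => headTerm i)
      _ = π * ρ * ∑ i ∈ Finset.range N, ((i:ℝ)+1) ^ (-α) := by rw [Finset.mul_sum]
      _ ≤ π * ρ * ((N:ℝ) ^ (1-α) / (1-α)) := by
          apply mul_le_mul_of_nonneg_left headSum (by positivity)
      _ ≤ π * ρ * ((2 * (ρ ^ (1-α))⁻¹) / (1-α)) := by
          apply mul_le_mul_of_nonneg_left _ (by positivity)
          exact div_le_div_of_nonneg_right e5 h1α.le |>.trans (le_refl _)
      _ = 2 * π / (1-α) * (ρ * (ρ ^ (1-α))⁻¹) := by field_simp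
      _ = 2 * π / (1-α) * ρ ^ α := by rw [e4]
  -- tail
  have hNρ : (N:ℝ) ^ (-α) ≤ ρ ^ α := by
    have h1 : (N:ℝ) ^ (-α) ≤ (1/ρ) ^ (-α) :=
      rpow_le_rpow_of_nonpos (by positivity) hNlb (by linarith)
    refine h1.trans (le_of_eq ?_)
    rw [one_div, ← Real.rpow_neg_one ρ, ← Real.rpow_mul hρ.le]
    norm_num
  have tailBound : ∀ K : ℕ, ∑ i ∈ Finset.range K, f (i + N) ≤ ρ ^ α / α := by
    intro K
    set g : ℕ → ℝ := fun i => ((i:ℝ)+(N:ℝ)) ^ (-α) with hg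
    have hper : ∀ i ∈ Finset.range K, α * f (i + N) ≤ g i - g (i+1) := by
      intro i _
      have hx1 : (1:ℝ) ≤ (i:ℝ) + (N:ℝ) := by
        have : (1:ℝ) ≤ (N:ℝ) := by exact_mod_cast hN1
        have : (0:ℝ) ≤ (i:ℝ) := Nat.cast_nonneg i
        linarith
      have hti := tailIneq hα hα1 hx1
      have hfb : f (i + N) ≤ ((i:ℝ)+(N:ℝ)+1) ^ (-(1+α)) := by
        refine (hfle (i+N)).trans (le_of_eq ?_)
        push_cast; ring_nf
      have hgeq : g (i+1) = ((i:ℝ)+(N:ℝ)+1) ^ (-α) := by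
        rw [hg]; push_cast; ring_nf
      rw [hgeq, hg]
      calc α * f (i + N) ≤ α * ((i:ℝ)+(N:ℝ)+1) ^ (-(1+α)) :=
            mul_le_mul_of_nonneg_left hfb hα.le
        _ ≤ ((i:ℝ)+(N:ℝ)) ^ (-α) - ((i:ℝ)+(N:ℝ)+1) ^ (-α) := hti
    have tele := Finset.sum_range_sub' g K
    have hgK : 0 ≤ g K := rpow_nonneg (by positivity) _
    have hg0 : g 0 = (N:ℝ) ^ (-α) := by rw [hg]; norm_num
    have : α * ∑ i ∈ Finset.range K, f (i + N) ≤ (N:ℝ) ^ (-α) := by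
      rw [Finset.mul_sum]
      calc ∑ i ∈ Finset.range K, α * f (i + N) ≤ ∑ i ∈ Finset.range K, (g i - g (i+1)) :=
            Finset.sum_le_sum hper
        _ = g 0 - g K := tele
        _ ≤ (N:ℝ) ^ (-α) := by rw [hg0]; linarith
    rw [le_div_iff₀ hα]
    calc (∑ i ∈ Finset.range K, f (i + N)) * α = α * ∑ i ∈ Finset.range K, f (i + N) := by ring
      _ ≤ (N:ℝ) ^ (-α) := this
      _ ≤ ρ ^ α := hNρ
  have tail : ∑' i, f (i + N) ≤ ρ ^ α / α :=
    Real.tsum_le_of_sum_range_le (fun n => hfnonneg _) tailBound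
  have hsplit := Summable.sum_add_tsum_nat_add N hsumf
  have hrhs : (2 * π / (1-α) + 1/α) * ρ ^ α = 2 * π / (1-α) * ρ ^ α + ρ ^ α / α := by
    field_simp
  rw [← hsplit, hrhs]
  exact add_le_add head tail

theorem stmt_2 (α : ℝ) (hα : 0 < α) (hα1 : α < 1) :
    ∃ C : ℝ, 0 < C ∧ ∀ ρ F₁ F₂ : ℝ, 0 < ρ → ρ < 1 → 0 < F₁ → 0 < F₂ →
      ∀ x₁ x₂ : ℝ,
        |(-(4 / π ^ (2 + 2 * α))) *
            ∑' p : ℕ × ℕ,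
              (F₁ + F₂) / ((((p.1 + 1 : ℝ) ^ 2 + (p.2 + 1 : ℝ) ^ 2) ^ α) * (p.1 + 1) * (p.2 + 1)) *
                Real.sin (π * (p.1 + 1) * ρ) * Real.sin (π * (p.2 + 1) * ρ) *
                Real.cos (π * (p.1 + 1) * x₁ + π * (p.2 + 1) * x₂)|
          ≤ C * (F₁ + F₂) * ρ ^ (2 * α) := by
  set C₁ : ℝ := 2 * π / (1 - α) + 1 / α with hC₁
  have hC₁pos : 0 < C₁ := by
    have := pi_pos
    have h1α : (0:ℝ) < 1 - α := by linarith
    have h1 : 0 < 2 * π / (1 - α) := by positivity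
    have h2 : 0 < 1 / α := by positivity
    rw [hC₁]; linarith
  have hπβ : (0:ℝ) < π ^ (2 + 2 * α) := rpow_pos_of_pos pi_pos _
  refine ⟨4 / π ^ (2 + 2 * α) * C₁ ^ 2, by positivity, ?_⟩
  intro ρ F₁ F₂ hρ hρ1 hF₁ hF₂ x₁ x₂
  set f : ℕ → ℝ := fun n => min 1 (π * ((n : ℝ) + 1) * ρ) * ((n : ℝ) + 1) ^ (-(1 + α)) with hf
  obtain ⟨hsumf, hS⟩ := sumKey hα hα1 hρ hρ1
  have hn1 : ∀ n : ℕ, (0:ℝ) < (n : ℝ) + 1 := fun n => by positivity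
  have hfnonneg : ∀ n, 0 ≤ f n := by
    intro n
    apply mul_nonneg (le_min zero_le_one (by positivity)) (rpow_nonneg (hn1 n).le _)
  set T : ℕ × ℕ → ℝ := fun p =>
    (F₁ + F₂) / ((((p.1 + 1 : ℝ) ^ 2 + (p.2 + 1 : ℝ) ^ 2) ^ α) * (p.1 + 1) * (p.2 + 1)) *
      Real.sin (π * (p.1 + 1) * ρ) * Real.sin (π * (p.2 + 1) * ρ) *
      Real.cos (π * (p.1 + 1) * x₁ + π * (p.2 + 1) * x₂) with hT
  have habs_sin : ∀ y : ℝ, 0 ≤ y → |Real.sin y| ≤ min 1 y := by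
    intro y hy
    refine le_min (abs_le.mpr ⟨neg_one_le_sin y, sin_le_one y⟩) ?_
    calc |Real.sin y| ≤ |y| := abs_sin_le_abs
      _ = y := abs_of_nonneg hy
  have hbound : ∀ p : ℕ × ℕ, |T p| ≤ (F₁ + F₂) * (f p.1 * f p.2) := by
    intro p
    set n : ℝ := (p.1 : ℝ) + 1 with hn
    set m : ℝ := (p.2 : ℝ) + 1 with hm
    have hn0 : (0:ℝ) < n := hn1 p.1
    have hm0 : (0:ℝ) < m := hn1 p.2
    have hD : n ^ (1+α) * m ^ (1+α) ≤ (n ^ 2 + m ^ 2) ^ α * n * m := by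
      have h1 : (n * m) ^ α ≤ (n ^ 2 + m ^ 2) ^ α := by
        apply rpow_le_rpow (by positivity) (by nlinarith [sq_nonneg (n - m)]) hα.le
      have h2 : n ^ (1+α) * m ^ (1+α) = (n * m) ^ α * n * m := by
        rw [Real.mul_rpow hn0.le hm0.le]
        rw [show (1:ℝ) + α = α + 1 by ring, Real.rpow_add hn0, Real.rpow_add hm0,
          Real.rpow_one, Real.rpow_one]
        ring
      rw [h2]
      have : (0:ℝ) ≤ n * m := by positivity
      exact mul_le_mul_of_nonneg_right (mul_le_mul_of_nonneg_right h1 hn0.le) hm0.le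
    have hDpos : (0:ℝ) < n ^ (1+α) * m ^ (1+α) := by
      have := rpow_pos_of_pos hn0 (1+α); have := rpow_pos_of_pos hm0 (1+α); positivity
    have hfrac : (F₁ + F₂) / ((n ^ 2 + m ^ 2) ^ α * n * m)
        ≤ (F₁ + F₂) * (n ^ (-(1+α)) * m ^ (-(1+α))) := by
      have h3 : (F₁ + F₂) / ((n ^ 2 + m ^ 2) ^ α * n * m) ≤ (F₁ + F₂) / (n ^ (1+α) * m ^ (1+α)) :=
        div_le_div_of_nonneg_left (by linarith) hDpos hD
      refine h3.trans (le_of_eq ?_)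
      rw [Real.rpow_neg hn0.le, Real.rpow_neg hm0.le]
      field_simp
    have hfracpos : 0 ≤ (F₁ + F₂) / ((n ^ 2 + m ^ 2) ^ α * n * m) := by
      apply div_nonneg (by linarith)
      have : (0:ℝ) ≤ (n ^ 2 + m ^ 2) ^ α := rpow_nonneg (by positivity) _
      positivity
    have hsin1 := habs_sin (π * n * ρ) (by positivity)
    have hsin2 := habs_sin (π * m * ρ) (by positivity)
    have hcos : |Real.cos (π * n * x₁ + π * m * x₂)| ≤ 1 :=
      abs_le.mpr ⟨neg_one_le_cos _, cos_le_one _⟩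
    rw [hT]
    simp only [abs_mul]
    rw [abs_of_nonneg hfracpos]
    calc (F₁ + F₂) / ((n ^ 2 + m ^ 2) ^ α * n * m) * |Real.sin (π * n * ρ)| *
          |Real.sin (π * m * ρ)| * |Real.cos (π * n * x₁ + π * m * x₂)|
        ≤ (F₁ + F₂) * (n ^ (-(1+α)) * m ^ (-(1+α))) * min 1 (π * n * ρ) * min 1 (π * m * ρ) * 1 := by
          apply mul_le_mul
          · apply mul_le_mul
            · apply mul_le_mul hfrac hsin1 (abs_nonneg _) (by positivity)
            · exact hsin2
            · exact abs_nonneg _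
            · positivity
          · exact hcos
          · exact abs_nonneg _
          · positivity
      _ = (F₁ + F₂) * (f p.1 * f p.2) := by
          rw [hf]; simp only [← hn, ← hm]
          ring
  have hsumprod : Summable (fun p : ℕ × ℕ => f p.1 * f p.2) :=
    hsumf.mul_of_nonneg hsumf hfnonneg hfnonneg
  have hsumg : Summable (fun p : ℕ × ℕ => (F₁ + F₂) * (f p.1 * f p.2)) := hsumprod.mul_left _
  have hsumabs : Summable (fun p => |T p|) :=
    hsumg.of_nonneg_of_le (fun p => abs_nonneg _) hbound
  have habsT : |∑' p, T p| ≤ ∑' p, |T p| := by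
    have := norm_tsum_le_tsum_norm (f := T) (by simpa [Real.norm_eq_abs] using hsumabs)
    simpa [Real.norm_eq_abs] using this
  have hSnn : 0 ≤ ∑' n, f n := tsum_nonneg hfnonneg
  have hmain : |∑' p, T p| ≤ (F₁ + F₂) * (C₁ ^ 2 * ρ ^ (2 * α)) := by
    have h1 : ∑' p, |T p| ≤ ∑' p : ℕ × ℕ, (F₁ + F₂) * (f p.1 * f p.2) :=
      Summable.tsum_le_tsum hbound hsumabs hsumg
    have h2 : ∑' p : ℕ × ℕ, (F₁ + F₂) * (f p.1 * f p.2)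
        = (F₁ + F₂) * ((∑' n, f n) * (∑' n, f n)) := by
      rw [tsum_mul_left, Summable.tsum_mul_tsum hsumf hsumf hsumprod]
    have h3 : (∑' n, f n) * (∑' n, f n) ≤ (C₁ * ρ ^ α) * (C₁ * ρ ^ α) :=
      mul_le_mul hS hS hSnn (by positivity)
    have h4 : (C₁ * ρ ^ α) * (C₁ * ρ ^ α) = C₁ ^ 2 * ρ ^ (2 * α) := by
      rw [show (2:ℝ) * α = α + α by ring, Real.rpow_add hρ]; ring
    calc |∑' p, T p| ≤ ∑' p, |T p| := habsT
      _ ≤ (F₁ + F₂) * ((∑' n, f n) * (∑' n, f n)) := by rw [← h2]; exact h1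
      _ ≤ (F₁ + F₂) * (C₁ ^ 2 * ρ ^ (2 * α)) := by
          rw [← h4]; exact mul_le_mul_of_nonneg_left h3 (by linarith)
  have hrw : 4 / π ^ (2 + 2 * α) * C₁ ^ 2 * (F₁ + F₂) * ρ ^ (2 * α)
      = 4 / π ^ (2 + 2 * α) * ((F₁ + F₂) * (C₁ ^ 2 * ρ ^ (2 * α))) := by ring
  rw [abs_mul, abs_neg, abs_of_pos (by positivity), hrw]
  exact mul_le_mul_of_nonneg_left hmain (by positivity)
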